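/- Let Q be a medial quandle with finite orbits such that for every orbit A there exists an orbit B with |A| and |B| coprime. Then Q is 2-reductive, i.e., (x·y)·y = y for all x,y ∈ Q. -/

import Mathlib

/-- The set of left translations of a binary algebra `(Q, op)`, viewed as permutations:
permutations `f` such that `f x = op a x` for some `a`. -/
def translations {Q : Type*} (op : Q → Q → Q) : Set (Equiv.Perm Q) :=
  { f | ∃ a : Q, ∀ x : Q, f x = op a x }

/-- The (left) multiplication group `LMlt(Q)`: the subgroup of the symmetric group
generated by the left translations. -/
def LMlt {Q : Type*} (op : Q → Q → Q) : Subgroup (Equiv.Perm Q) :=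
  Subgroup.closure (translations op)

/-- The displacement group `Dis(Q)`: the subgroup generated by all `L_a * L_b⁻¹`. -/
def Dis {Q : Type*} (op : Q → Q → Q) : Subgroup (Equiv.Perm Q) :=
  Subgroup.closure { f | ∃ g ∈ translations op, ∃ h ∈ translations op, f = g * h⁻¹ }

/-- `(Q, op)` is a quandle: idempotent, left distributive, left quasigroup. -/
def IsQuandle {Q : Type*} (op : Q → Q → Q) : Prop :=
  (∀ x, op x x = x) ∧
  (∀ x y z, op x (op y z) = op (op x y) (op x z)) ∧
  (∀ x y, ∃! u, op x u = y)

/-- `(Q, op)` is medial. -/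
def IsMedial {Q : Type*} (op : Q → Q → Q) : Prop :=
  ∀ x y u v, op (op x y) (op u v) = op (op x u) (op y v)

/-- The orbit of `e` under the multiplication group. -/
def qOrbit {Q : Type*} (op : Q → Q → Q) (e : Q) : Set Q :=
  { y | ∃ f ∈ LMlt op, f e = y }

/-- The orbit of `e` under the displacement group. -/
def disOrbit {Q : Type*} (op : Q → Q → Q) (e : Q) : Set Q :=
  { y | ∃ f ∈ Dis op, f e = y }


namespace TwoRedAux

variable {Q : Type*} {op : Q → Q → Q}

/-- Left translation as a permutation. -/
noncomputable def ell (hQ : IsQuandle op) (a : Q) : Equiv.Perm Q :=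
  Equiv.ofBijective (op a)
    ⟨fun u v huv => (hQ.2.2 a (op a v)).unique huv rfl,
     fun y => ⟨(hQ.2.2 a y).exists.choose, (hQ.2.2 a y).exists.choose_spec⟩⟩

@[simp] lemma ell_apply (hQ : IsQuandle op) (a x : Q) : ell hQ a x = op a x := rfl

lemma ell_mem_translations (hQ : IsQuandle op) (a : Q) : ell hQ a ∈ translations op :=
  ⟨a, fun _ => rfl⟩

lemma mem_translations_iff (hQ : IsQuandle op) {f : Equiv.Perm Q} :
    f ∈ translations op ↔ ∃ a, f = ell hQ a := by
  constructor
  · rintro ⟨a, ha⟩; exact ⟨a, Equiv.ext fun x => ha x⟩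
  · rintro ⟨a, rfl⟩; exact ell_mem_translations hQ a

lemma ell_mem_LMlt (hQ : IsQuandle op) (a : Q) : ell hQ a ∈ LMlt op :=
  Subgroup.subset_closure (ell_mem_translations hQ a)

lemma ell_conj (hQ : IsQuandle op) (a b : Q) :
    ell hQ a * ell hQ b * (ell hQ a)⁻¹ = ell hQ (op a b) := by
  ext z
  simp only [Equiv.Perm.mul_apply, ell_apply]
  rw [hQ.2.1 a b ((ell hQ a)⁻¹ z)]
  congr 1
  exact (ell hQ a).apply_symm_apply z

lemma conj_ell (hQ : IsQuandle op) {g : Equiv.Perm Q} (hg : g ∈ LMlt op) :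
    ∀ b, g * ell hQ b * g⁻¹ = ell hQ (g b) := by
  refine Subgroup.closure_induction (p := fun g _ => ∀ b, g * ell hQ b * g⁻¹ = ell hQ (g b))
    ?_ ?_ ?_ ?_ hg
  · intro f hf b
    obtain ⟨a, rfl⟩ := (mem_translations_iff hQ).1 hf
    exact ell_conj hQ a b
  · intro b; simp
  · intro x y hx hy px py b
    have h : x * y * ell hQ b * (x * y)⁻¹ = x * (y * ell hQ b * y⁻¹) * x⁻¹ := by group
    rw [h, py b, px (y b)]
    rfl
  · intro x hx px b
    have h1 := px (x⁻¹ b)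
    rw [show x (x⁻¹ b) = b from x.apply_symm_apply b] at h1
    rw [← h1]; group

lemma Dis_le_LMlt : Dis op ≤ LMlt op := by
  rw [Dis, Subgroup.closure_le]
  rintro f ⟨g, hg, h, hh, rfl⟩
  exact mul_mem (Subgroup.subset_closure hg) (inv_mem (Subgroup.subset_closure hh))

lemma gen_mem_Dis (hQ : IsQuandle op) (a b : Q) : ell hQ a * (ell hQ b)⁻¹ ∈ Dis op :=
  Subgroup.subset_closure ⟨ell hQ a, ell_mem_translations hQ a, ell hQ b,
    ell_mem_translations hQ b, rfl⟩

lemma conj_Dis (hQ : IsQuandle op) {g d : Equiv.Perm Q} (hg : g ∈ LMlt op) (hd : d ∈ Dis op) :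
    g * d * g⁻¹ ∈ Dis op := by
  refine Subgroup.closure_induction (p := fun d _ => g * d * g⁻¹ ∈ Dis op) ?_ ?_ ?_ ?_ hd
  · rintro f ⟨s, hs, t, ht, rfl⟩
    obtain ⟨a, rfl⟩ := (mem_translations_iff hQ).1 hs
    obtain ⟨b, rfl⟩ := (mem_translations_iff hQ).1 ht
    have h : g * (ell hQ a * (ell hQ b)⁻¹) * g⁻¹
        = (g * ell hQ a * g⁻¹) * (g * ell hQ b * g⁻¹)⁻¹ := by group
    rw [h, conj_ell hQ hg a, conj_ell hQ hg b]
    exact gen_mem_Dis hQ (g a) (g b)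
  · simpa using one_mem (Dis op)
  · intro x y hx hy px py
    have h : g * (x * y) * g⁻¹ = (g * x * g⁻¹) * (g * y * g⁻¹) := by group
    rw [h]; exact mul_mem px py
  · intro x hx px
    have h : g * x⁻¹ * g⁻¹ = (g * x * g⁻¹)⁻¹ := by group
    rw [h]; exact inv_mem px

lemma star (hQ : IsQuandle op) (hM : IsMedial op) (x y u : Q) :
    ell hQ y * (ell hQ x)⁻¹ * ell hQ u = ell hQ u * (ell hQ x)⁻¹ * ell hQ y := by
  have h1 : (ell hQ x * ell hQ y * (ell hQ x)⁻¹) * ell hQ u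
      = (ell hQ x * ell hQ u * (ell hQ x)⁻¹) * ell hQ y := by
    rw [ell_conj hQ x y, ell_conj hQ x u]
    ext v
    exact hM x y u v
  have h2 : ell hQ x * (ell hQ y * (ell hQ x)⁻¹ * ell hQ u)
      = ell hQ x * (ell hQ u * (ell hQ x)⁻¹ * ell hQ y) := by
    rw [← mul_assoc, ← mul_assoc, ← mul_assoc, ← mul_assoc]; exact h1
  exact mul_left_cancel h2

lemma gens_comm (hQ : IsQuandle op) (hM : IsMedial op) (a b c d : Q) :
    Commute (ell hQ a * (ell hQ b)⁻¹) (ell hQ c * (ell hQ d)⁻¹) := by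
  set A := ell hQ a; set B := ell hQ b; set C := ell hQ c; set D := ell hQ d
  have s1 : A * B⁻¹ * C = C * B⁻¹ * A := star hQ hM b a c
  have s2 : A * D⁻¹ * B = B * D⁻¹ * A := star hQ hM d a b
  have h4 : B⁻¹ * A * D⁻¹ = D⁻¹ * A * B⁻¹ := by
    have h3 : B⁻¹ * (A * D⁻¹ * B) * B⁻¹ = B⁻¹ * (B * D⁻¹ * A) * B⁻¹ := by rw [s2]
    have e1 : B⁻¹ * (A * D⁻¹ * B) * B⁻¹ = B⁻¹ * A * D⁻¹ := by group
    have e2 : B⁻¹ * (B * D⁻¹ * A) * B⁻¹ = D⁻¹ * A * B⁻¹ := by group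
    rw [← e1, h3, e2]
  show A * B⁻¹ * (C * D⁻¹) = C * D⁻¹ * (A * B⁻¹)
  calc A * B⁻¹ * (C * D⁻¹) = (A * B⁻¹ * C) * D⁻¹ := by group
  _ = (C * B⁻¹ * A) * D⁻¹ := by rw [s1]
  _ = C * (B⁻¹ * A * D⁻¹) := by group
  _ = C * (D⁻¹ * A * B⁻¹) := by rw [h4]
  _ = C * D⁻¹ * (A * B⁻¹) := by group

lemma dis_comm (hQ : IsQuandle op) (hM : IsMedial op) {g h : Equiv.Perm Q}
    (hg : g ∈ Dis op) (hh : h ∈ Dis op) : Commute g h := by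
  have step : ∀ s ∈ { f : Equiv.Perm Q |
      ∃ g ∈ translations op, ∃ h ∈ translations op, f = g * h⁻¹ }, Commute s h := by
    rintro s ⟨u, hu, v, hv, rfl⟩
    obtain ⟨a, rfl⟩ := (mem_translations_iff hQ).1 hu
    obtain ⟨b, rfl⟩ := (mem_translations_iff hQ).1 hv
    refine Subgroup.closure_induction (p := fun h _ => Commute (ell hQ a * (ell hQ b)⁻¹) h)
      ?_ (Commute.one_right _) (fun x y _ _ px py => px.mul_right py)
      (fun x _ px => px.inv_right) hh
    rintro t ⟨u', hu', v', hv', rfl⟩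
    obtain ⟨c, rfl⟩ := (mem_translations_iff hQ).1 hu'
    obtain ⟨e, rfl⟩ := (mem_translations_iff hQ).1 hv'
    exact gens_comm hQ hM a b c e
  refine Subgroup.closure_induction (p := fun g _ => Commute g h)
    step (Commute.one_left _) (fun x y _ _ px py => px.mul_left py)
    (fun x _ px => px.inv_left) hg

/-- If `g ∈ Dis` fixes a single point, it commutes with every translation. -/
lemma central_of_fix (hQ : IsQuandle op) (hM : IsMedial op) {g : Equiv.Perm Q}
    (hg : g ∈ Dis op) {f : Q} (hf : g f = f) (x : Q) :
    Commute (ell hQ x) g := by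
  have h1 : g * ell hQ f * g⁻¹ = ell hQ f := by
    rw [conj_ell hQ (Dis_le_LMlt hg) f, hf]
  have hcf : Commute g (ell hQ f) := by
    have := h1
    rw [mul_inv_eq_iff_eq_mul] at this
    exact this
  have hcd : Commute g (ell hQ x * (ell hQ f)⁻¹) :=
    dis_comm hQ hM hg (gen_mem_Dis hQ x f)
  have : Commute g ((ell hQ x * (ell hQ f)⁻¹) * ell hQ f) := hcd.mul_right hcf
  rw [inv_mul_cancel_right] at this
  exact this.symm

lemma fix_zpow {σ : Equiv.Perm Q} {y : Q} (h : σ y = y) : ∀ n : ℤ, (σ ^ n) y = y := by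
  have hn : ∀ n : ℕ, (σ ^ n) y = y := by
    intro n
    induction n with
    | zero => simp
    | succ k ih => rw [pow_succ, Equiv.Perm.mul_apply, h, ih]
  intro n
  induction n using Int.rec with
  | ofNat m => simpa using hn m
  | negSucc m =>
      have : σ ^ (Int.negSucc m) = ((σ ^ (m + 1) : Equiv.Perm Q))⁻¹ := by
        rw [zpow_negSucc]
      rw [this]
      have h2 := hn (m + 1)
      calc (σ ^ (m + 1))⁻¹ y = (σ ^ (m + 1))⁻¹ ((σ ^ (m + 1)) y) := by rw [h2]
        _ = y := Equiv.symm_apply_apply _ _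

/-- membership in orbit of LMlt implies reachable by Dis. -/
lemma qOrbit_eq_disOrbit (hQ : IsQuandle op) (e : Q) {f : Equiv.Perm Q} (hf : f ∈ LMlt op) :
    ∃ d ∈ Dis op, f e = d e := by
  have key : ∃ d ∈ Dis op, ∃ n : ℤ, f = d * (ell hQ e) ^ n := by
    refine Subgroup.closure_induction
      (p := fun f _ => ∃ d ∈ Dis op, ∃ n : ℤ, f = d * (ell hQ e) ^ n) ?_ ?_ ?_ ?_ hf
    · intro s hs
      obtain ⟨a, rfl⟩ := (mem_translations_iff hQ).1 hs
      exact ⟨ell hQ a * (ell hQ e)⁻¹, gen_mem_Dis hQ a e, 1, by group⟩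
    · exact ⟨1, one_mem _, 0, by group⟩
    · rintro x y _ _ ⟨d1, hd1, n1, rfl⟩ ⟨d2, hd2, n2, rfl⟩
      have hz : (ell hQ e) ^ n1 ∈ LMlt op := zpow_mem (ell_mem_LMlt hQ e) n1
      refine ⟨d1 * ((ell hQ e) ^ n1 * d2 * ((ell hQ e) ^ n1)⁻¹),
        mul_mem hd1 (conj_Dis hQ hz hd2), n1 + n2, ?_⟩
      rw [zpow_add]
      group
    · rintro x _ ⟨d, hd, n, rfl⟩
      have hz : ((ell hQ e) ^ n)⁻¹ ∈ LMlt op := inv_mem (zpow_mem (ell_mem_LMlt hQ e) n)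
      refine ⟨((ell hQ e) ^ n)⁻¹ * d⁻¹ * (((ell hQ e) ^ n)⁻¹)⁻¹,
        conj_Dis hQ hz (inv_mem hd), -n, ?_⟩
      group
  obtain ⟨d, hd, n, rfl⟩ := key
  refine ⟨d, hd, ?_⟩
  have he : ell hQ e e = e := by rw [ell_apply]; exact hQ.1 e
  rw [Equiv.Perm.mul_apply, fix_zpow he n]

/-- Workhorse: for `g ∈ Dis`, `g ^ |orbit of e|` fixes `e`. -/
lemma pow_ncard_fix (hQ : IsQuandle op) (hM : IsMedial op)
    (hfin : ∀ e : Q, (qOrbit op e).Finite) {g : Equiv.Perm Q} (hg : g ∈ Dis op) (e : Q) :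
    (g ^ (qOrbit op e).ncard) e = e := by
  set H := Dis op
  -- action of H on Q
  have horb : MulAction.orbit H e = qOrbit op e := by
    ext z
    constructor
    · rintro ⟨⟨d, hd⟩, rfl⟩
      exact ⟨d, Dis_le_LMlt hd, rfl⟩
    · rintro ⟨f, hf, rfl⟩
      obtain ⟨d, hd, hde⟩ := qOrbit_eq_disOrbit hQ e hf
      exact ⟨⟨d, hd⟩, hde.symm⟩
  have hfinorb : Finite (MulAction.orbit H e) := by
    rw [horb]; exact (hfin e).to_subtype
  set S := MulAction.stabilizer H e
  haveI : S.Normal := by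
    constructor
    intro n hn t
    have hcomm : (t : Equiv.Perm Q) * n = n * t := dis_comm hQ hM t.2 n.2
    have hco : ((t * n * t⁻¹ : ↥H) : Equiv.Perm Q) = (n : Equiv.Perm Q) := by
      push_cast
      rw [hcomm]
      group
    rwa [Subtype.ext hco]
  haveI : Finite (H ⧸ S) := Finite.of_equiv _ (MulAction.orbitEquivQuotientStabilizer H e)
  have hidx : S.index = (qOrbit op e).ncard := by
    have h1 : Nat.card (MulAction.orbit H e) = Nat.card (H ⧸ S) :=
      Nat.card_congr (MulAction.orbitEquivQuotientStabilizer H e)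
    have h2 : Nat.card (MulAction.orbit H e) = (qOrbit op e).ncard := by
      rw [horb, Nat.card_coe_set_eq]
    rw [Subgroup.index, ← h1, h2]
  have hmem := Subgroup.pow_index_mem S (⟨g, hg⟩ : H)
  rw [hidx] at hmem
  have hst : ((⟨g, hg⟩ : H) ^ (qOrbit op e).ncard) • e = e := hmem
  simpa [Subgroup.smul_def, SubmonoidClass.coe_pow, Equiv.Perm.smul_def] using hst

end TwoRedAux

open TwoRedAux in
/-- Corollary 6.9: a medial quandle with finite orbits, such that every orbit has an
orbit of coprime size, is 2-reductive. -/
theorem two_reductive_of_pairwise_coprime {Q : Type*} (op : Q → Q → Q)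
    (hQ : IsQuandle op) (hM : IsMedial op)
    (hfin : ∀ e : Q, (qOrbit op e).Finite)
    (hcop : ∀ e : Q, ∃ f : Q, Nat.Coprime (qOrbit op e).ncard (qOrbit op f).ncard) :
    ∀ x y : Q, op (op x y) y = y := by
  intro x y
  set L := ell hQ with hL
  have hd : L y * (L x)⁻¹ ∈ Dis op := gen_mem_Dis hQ y x
  set d := L y * (L x)⁻¹ with hd_def
  set h := (L x * d * (L x)⁻¹) * d⁻¹ with hh_def
  have hhD : h ∈ Dis op := mul_mem (conj_Dis hQ (ell_mem_LMlt hQ x) hd) (inv_mem hd)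
  obtain ⟨f, hcop'⟩ := hcop y
  set m := (qOrbit op y).ncard with hm_def
  set k := (qOrbit op f).ncard with hk_def
  have hm : (h ^ m) y = y := pow_ncard_fix hQ hM hfin hhD y
  have hdk : (d ^ k) f = f := pow_ncard_fix hQ hM hfin hd f
  have hcomm : Commute (L x) (d ^ k) := central_of_fix hQ hM (pow_mem hd k) hdk x
  have hk1 : h ^ k = 1 := by
    have c1 : Commute (L x * d * (L x)⁻¹) d⁻¹ :=
      dis_comm hQ hM (conj_Dis hQ (ell_mem_LMlt hQ x) hd) (inv_mem hd)
    have e1 : h ^ k = (L x * d * (L x)⁻¹) ^ k * (d⁻¹) ^ k := c1.mul_pow k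
    have e2 : (L x * d * (L x)⁻¹) ^ k = L x * d ^ k * (L x)⁻¹ := by
      have := map_pow (MulAut.conj (L x)) d k
      simpa [MulAut.conj_apply] using this
    rw [e1, e2, inv_pow]
    rw [mul_assoc (L x * d ^ k) (L x)⁻¹ (d ^ k)⁻¹] at *
    calc L x * d ^ k * ((L x)⁻¹ * (d ^ k)⁻¹)
        = d ^ k * L x * ((L x)⁻¹ * (d ^ k)⁻¹) := by rw [hcomm.eq]
      _ = 1 := by group
  have hy : h y = y := by
    have hb : (1 : ℤ) = (m : ℤ) * Nat.gcdA m k + (k : ℤ) * Nat.gcdB m k := by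
      have := Nat.gcd_eq_gcd_ab m k
      rwa [Nat.Coprime.gcd_eq_one hcop', Nat.cast_one] at this
    have e3 : h = (h ^ (m : ℤ)) ^ Nat.gcdA m k * (h ^ (k : ℤ)) ^ Nat.gcdB m k := by
      calc h = h ^ (1 : ℤ) := (zpow_one h).symm
        _ = h ^ ((m : ℤ) * Nat.gcdA m k + (k : ℤ) * Nat.gcdB m k) := by rw [← hb]
        _ = h ^ ((m : ℤ) * Nat.gcdA m k) * h ^ ((k : ℤ) * Nat.gcdB m k) := zpow_add h _ _
        _ = (h ^ (m : ℤ)) ^ Nat.gcdA m k * (h ^ (k : ℤ)) ^ Nat.gcdB m k := by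
            rw [zpow_mul, zpow_mul]
    have f1 : (h ^ (k : ℤ)) ^ Nat.gcdB m k = 1 := by
      rw [zpow_natCast, hk1, one_zpow]
    have f2 : ((h ^ (m : ℤ)) ^ Nat.gcdA m k) y = y := by
      rw [zpow_natCast]
      exact fix_zpow hm _
    rw [e3, f1, mul_one]
    exact f2
  have hmul : h * L y = L x * L y * (L x)⁻¹ := by
    rw [hh_def, hd_def]; group
  have hY : L y y = y := hQ.1 y
  calc op (op x y) y = ell hQ (op x y) y := rfl
    _ = (L x * L y * (L x)⁻¹) y := by rw [← ell_conj hQ x y, hL]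
    _ = (h * L y) y := by rw [hmul]
    _ = h (L y y) := rfl
    _ = h y := by rw [hY]
    _ = y := hy
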